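/- Let S be a hyponormal unilateral weighted shift on H with nonzero weight sequence (α_n)_{n≥1} and M = lim_{n→∞} |α_n|. Then the continuous spectrum of S is exactly the circle {λ ∈ ℂ : |λ| = M}; that is, the set of λ in the spectrum of S for which λI − S is injective and has dense range equals {λ : |λ| = M}. -/

import Mathlib

open scoped ComplexConjugate
open Filter
open scoped ENNReal

noncomputable section

namespace WSAux

variable {H : Type*} [NormedAddCommGroup H] [InnerProductSpace ℂ H] [CompleteSpace H]

local notation "⟪" x ", " y "⟫" => @inner ℂ _ _ x y

lemma ext_zero (e : HilbertBasis ℕ ℂ H) (v : H) (h : ∀ n, e.repr v n = 0) : v = 0 := by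
  have h2 := e.hasSum_repr v
  simp only [h, zero_smul] at h2
  exact h2.unique hasSum_zero

omit [CompleteSpace H] in
lemma inner_basis (e : HilbertBasis ℕ ℂ H) (i j : ℕ) :
    ⟪e i, e j⟫ = if i = j then 1 else 0 :=
  orthonormal_iff_ite.mp e.orthonormal i j

lemma parseval (e : HilbertBasis ℕ ℂ H) (x : H) :
    HasSum (fun n => ‖e.repr x n‖ ^ 2) (‖x‖ ^ 2) := by
  have h := (e.hasSum_inner_mul_inner x x).mapL Complex.reCLM
  have h1 : ∀ n : ℕ, Complex.reCLM (⟪x, e n⟫ * ⟪e n, x⟫) = ‖e.repr x n‖ ^ 2 := by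
    intro n
    rw [← inner_conj_symm (e n) x, Complex.mul_conj, e.repr_apply_apply]
    have habs : ‖⟪x, e n⟫‖ = ‖⟪e n, x⟫‖ := by
      rw [← inner_conj_symm x (e n)]; exact Complex.norm_conj _
    rw [Complex.normSq_eq_norm_sq]
    simp [habs, ← Complex.ofReal_pow]
  have h2 : Complex.reCLM ⟪x, x⟫ = ‖x‖ ^ 2 := (inner_self_eq_norm_sq (𝕜 := ℂ) x : _)
  simpa only [h1, h2] using h

lemma coeff_eq (e : HilbertBasis ℕ ℂ H) {v w : H} (h : ∀ n, e.repr v n = e.repr w n) :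
    v = w := by
  have h0 : v - w = 0 := by
    refine ext_zero e _ fun n => ?_
    rw [map_sub, lp.coeFn_sub, Pi.sub_apply, h n, sub_self]
  exact sub_eq_zero.mp h0

section Shift

variable (e : HilbertBasis ℕ ℂ H) (α : ℕ → ℂ) (S : H →L[ℂ] H)
  (hS : ∀ n : ℕ, S (e n) = α n • e (n + 1))

include hS

lemma adjoint_basis_zero : ContinuousLinearMap.adjoint S (e 0) = 0 := by
  refine ext_zero e _ fun n => ?_
  rw [e.repr_apply_apply, ContinuousLinearMap.adjoint_inner_right, hS n,
    inner_smul_left, inner_basis]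
  simp

lemma adjoint_basis_succ (m : ℕ) :
    ContinuousLinearMap.adjoint S (e (m + 1)) = (starRingEnd ℂ) (α m) • e m := by
  refine coeff_eq e fun n => ?_
  rw [e.repr_apply_apply, e.repr_apply_apply, ContinuousLinearMap.adjoint_inner_right,
    hS n, inner_smul_left, inner_smul_right, inner_basis, inner_basis]
  by_cases h : n = m
  · simp [h]
  · simp [h, fun hc : n + 1 = m + 1 => h (Nat.succ_injective hc)]

lemma coeff_S_zero (x : H) : e.repr (S x) 0 = 0 := by
  rw [e.repr_apply_apply, ← ContinuousLinearMap.adjoint_inner_left S,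
    adjoint_basis_zero e α S hS, inner_zero_left]

lemma coeff_S_succ (x : H) (n : ℕ) : e.repr (S x) (n + 1) = α n * e.repr x n := by
  rw [e.repr_apply_apply, ← ContinuousLinearMap.adjoint_inner_left S,
    adjoint_basis_succ e α S hS, inner_smul_left, ← e.repr_apply_apply]
  simp

lemma norm_S_le {M : ℝ} (hα : ∀ n, ‖α n‖ ≤ M) (hM0 : 0 ≤ M) (x : H) :
    ‖S x‖ ≤ M * ‖x‖ := by
  set f : ℕ → ℝ := fun m => ‖e.repr (S x) m‖ ^ 2 with hf
  have hsum : HasSum f (‖S x‖ ^ 2) := parseval e (S x)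
  have hf0 : f 0 = 0 := by simp [hf, coeff_S_zero e α S hS x]
  have h1 : HasSum (fun n => f (n + 1)) (‖S x‖ ^ 2) := by
    refine (hasSum_nat_add_iff 1).mpr ?_
    simpa [hf0] using hsum
  have h3 : HasSum (fun n => M ^ 2 * ‖e.repr x n‖ ^ 2) (M ^ 2 * ‖x‖ ^ 2) :=
    (parseval e x).mul_left _
  have hle : ‖S x‖ ^ 2 ≤ M ^ 2 * ‖x‖ ^ 2 := by
    refine hasSum_le (fun n => ?_) h1 h3
    show ‖e.repr (S x) (n + 1)‖ ^ 2 ≤ M ^ 2 * ‖e.repr x n‖ ^ 2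
    rw [coeff_S_succ e α S hS x n, norm_mul, mul_pow]
    exact mul_le_mul_of_nonneg_right
      (pow_le_pow_left₀ (norm_nonneg _) (hα n) 2) (sq_nonneg _)
  calc ‖S x‖ = Real.sqrt (‖S x‖ ^ 2) := (Real.sqrt_sq (norm_nonneg _)).symm
    _ ≤ Real.sqrt (M ^ 2 * ‖x‖ ^ 2) := Real.sqrt_le_sqrt hle
    _ = M * ‖x‖ := by
        rw [← mul_pow, Real.sqrt_sq (by positivity)]

lemma inj (hnz : ∀ n, α n ≠ 0) (lam : ℂ) :
    Function.Injective ⇑(lam • (1 : H →L[ℂ] H) - S) := by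
  set T := lam • (1 : H →L[ℂ] H) - S with hT
  have key : ∀ x, T x = 0 → x = 0 := by
    intro x hx
    have hc : ∀ m, lam * e.repr x m - e.repr (S x) m = 0 := by
      intro m
      have h0 : e.repr (T x) m = 0 := by rw [hx, map_zero, lp.coeFn_zero, Pi.zero_apply]
      rw [hT] at h0
      rw [ContinuousLinearMap.sub_apply, ContinuousLinearMap.smul_apply,
        ContinuousLinearMap.one_apply, map_sub, map_smul, lp.coeFn_sub, lp.coeFn_smul,
        Pi.sub_apply, Pi.smul_apply, smul_eq_mul] at h0
      exact h0
    have h0 : lam * e.repr x 0 = 0 := by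
      have := hc 0; rwa [coeff_S_zero e α S hS, sub_zero] at this
    have hsucc : ∀ n, lam * e.repr x (n + 1) = α n * e.repr x n := by
      intro n
      have := hc (n + 1); rw [coeff_S_succ e α S hS] at this
      exact sub_eq_zero.mp this
    refine ext_zero e x ?_
    by_cases hlam : lam = 0
    · intro n
      have hz : α n * e.repr x n = 0 := by rw [← hsucc n, hlam, zero_mul]
      exact (mul_eq_zero.mp hz).resolve_left (hnz n)
    · intro n
      induction n with
      | zero => exact (mul_eq_zero.mp h0).resolve_left hlam
      | succ n ih =>
          have := hsucc n
          rw [ih, mul_zero] at this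
          exact (mul_eq_zero.mp this).resolve_left hlam
  intro x y hxy
  have hT0 : T (x - y) = 0 := by rw [map_sub, hxy, sub_self]
  exact sub_eq_zero.mp (key _ hT0)

lemma dense_range_of_ge (hnz : ∀ n, α n ≠ 0) {M : ℝ} (hα : ∀ n, ‖α n‖ ≤ M)
    {lam : ℂ} (hlam : M ≤ ‖lam‖) :
    DenseRange ⇑(lam • (1 : H →L[ℂ] H) - S) := by
  set T := lam • (1 : H →L[ℂ] H) - S with hT
  have horth : (LinearMap.range (T : H →ₗ[ℂ] H))ᗮ = ⊥ := by
    rw [Submodule.eq_bot_iff]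
    intro y hy
    rw [Submodule.mem_orthogonal] at hy
    have hrec : ∀ n, (starRingEnd ℂ) lam * e.repr y n
        = (starRingEnd ℂ) (α n) * e.repr y (n + 1) := by
      intro n
      have h0 : ⟪T (e n), y⟫ = 0 := hy _ (LinearMap.mem_range.mpr ⟨e n, rfl⟩)
      have hTe : T (e n) = lam • e n - α n • e (n + 1) := by
        rw [hT]; simp [hS n]
      rw [hTe, inner_sub_left, inner_smul_left, inner_smul_left,
        ← e.repr_apply_apply, ← e.repr_apply_apply, sub_eq_zero] at h0
      exact h0
    have hmono2 : ∀ n, ‖e.repr y n‖ ≤ ‖e.repr y (n + 1)‖ := by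
      intro n
      have h1 : ‖lam‖ * ‖e.repr y n‖ = ‖α n‖ * ‖e.repr y (n + 1)‖ := by
        have := congrArg norm (hrec n)
        simpa [norm_mul] using this
      have ha : 0 < ‖α n‖ := norm_pos_iff.mpr (hnz n)
      have hal : ‖α n‖ ≤ ‖lam‖ := (hα n).trans hlam
      nlinarith [norm_nonneg (e.repr y n), norm_nonneg (e.repr y (n + 1))]
    have hmon : Monotone fun n => ‖e.repr y n‖ ^ 2 := by
      refine monotone_nat_of_le_succ fun n => ?_
      exact pow_le_pow_left₀ (norm_nonneg _) (hmono2 n) 2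
    have hten : Tendsto (fun n => ‖e.repr y n‖ ^ 2) atTop (nhds 0) :=
      (parseval e y).summable.tendsto_atTop_zero
    refine ext_zero e y fun n => ?_
    have hle : ‖e.repr y n‖ ^ 2 ≤ 0 := hmon.ge_of_tendsto hten n
    have : ‖e.repr y n‖ = 0 := by nlinarith [norm_nonneg (e.repr y n)]
    exact norm_eq_zero.mp this
  have htop : (LinearMap.range (T : H →ₗ[ℂ] H)).topologicalClosure = ⊤ :=
    Submodule.topologicalClosure_eq_top_iff.mpr horth
  have hdense : Dense ((LinearMap.range (T : H →ₗ[ℂ] H) : Submodule ℂ H) : Set H) :=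
    Submodule.dense_iff_topologicalClosure_eq_top.mpr htop
  simpa [LinearMap.coe_range, DenseRange] using hdense

lemma exists_adjoint_ker (hnz : ∀ n, α n ≠ 0) {M : ℝ}
    (hM : Tendsto (fun n : ℕ => ‖α n‖) atTop (nhds M)) {lam : ℂ} (hlt : ‖lam‖ < M) :
    ∃ y : H, y ≠ 0 ∧ ContinuousLinearMap.adjoint (lam • (1 : H →L[ℂ] H) - S) y = 0 := by
  obtain ⟨r, hr1, hr2⟩ := exists_between hlt
  have hr0 : 0 < r := lt_of_le_of_lt (norm_nonneg _) hr1
  set f : ℕ → ℂ := fun n =>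
    ∏ k ∈ Finset.range n, ((starRingEnd ℂ) lam / (starRingEnd ℂ) (α k)) with hf
  have hfsucc : ∀ n, f (n + 1) = f n * ((starRingEnd ℂ) lam / (starRingEnd ℂ) (α n)) :=
    fun n => Finset.prod_range_succ _ n
  have hev : ∀ᶠ n in atTop, r < ‖α n‖ := hM.eventually (eventually_gt_nhds hr2)
  have hsum : Summable fun n => ‖f n‖ ^ 2 := by
    refine summable_of_ratio_norm_eventually_le (r := (‖lam‖ / r) ^ 2) ?_ ?_
    · exact pow_lt_one₀ (by positivity) ((div_lt_one hr0).mpr hr1) (by norm_num)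
    · filter_upwards [hev] with n hn
      have h1 : ‖f (n + 1)‖ = ‖f n‖ * (‖lam‖ / ‖α n‖) := by
        rw [hfsucc, norm_mul, norm_div, RCLike.norm_conj, RCLike.norm_conj]
      have h2 : ‖lam‖ / ‖α n‖ ≤ ‖lam‖ / r := by
        gcongr
      rw [Real.norm_eq_abs, Real.norm_eq_abs, abs_of_nonneg (by positivity),
        abs_of_nonneg (by positivity), h1, mul_pow]
      have h3 : (‖lam‖ / ‖α n‖) ^ 2 ≤ (‖lam‖ / r) ^ 2 :=
        pow_le_pow_left₀ (by positivity) h2 2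
      nlinarith [sq_nonneg ‖f n‖]
  have hmem : Memℓp f 2 := by
    refine memℓp_gen ?_
    have h2 : (fun i => ‖f i‖ ^ (2 : ℝ≥0∞).toReal) = fun i => ‖f i‖ ^ 2 := by
      funext i
      rw [show ((2 : ℝ≥0∞)).toReal = ((2 : ℕ) : ℝ) by simp, Real.rpow_natCast]
    rw [h2]
    exact hsum
  set y : H := e.repr.symm (⟨f, hmem⟩ : lp (fun _ : ℕ => ℂ) 2) with hy
  have hyc : ∀ n, e.repr y n = f n := by
    intro n
    rw [hy, LinearIsometryEquiv.apply_symm_apply]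
  refine ⟨y, ?_, ?_⟩
  · intro h
    have h0 := hyc 0
    rw [h, map_zero, lp.coeFn_zero, Pi.zero_apply] at h0
    have : f 0 = 1 := by simp [hf]
    rw [this] at h0
    exact zero_ne_one h0
  · set T := lam • (1 : H →L[ℂ] H) - S with hT
    refine ext_zero e _ fun n => ?_
    rw [e.repr_apply_apply, ContinuousLinearMap.adjoint_inner_right]
    have hTe : T (e n) = lam • e n - α n • e (n + 1) := by rw [hT]; simp [hS n]
    rw [hTe, inner_sub_left, inner_smul_left, inner_smul_left,
      ← e.repr_apply_apply, ← e.repr_apply_apply, hyc, hyc, hfsucc]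
    have hc : (starRingEnd ℂ) (α n) ≠ 0 := by
      simpa using hnz n
    field_simp
    ring

lemma mem_spectrum_of_lt (hnz : ∀ n, α n ≠ 0) {M : ℝ}
    (hM : Tendsto (fun n : ℕ => ‖α n‖) atTop (nhds M)) {lam : ℂ} (hlt : ‖lam‖ < M) :
    lam ∈ spectrum ℂ S := by
  obtain ⟨y, hy0, hker⟩ := exists_adjoint_ker e α S hS hnz hM hlt
  by_contra hns
  rw [spectrum.notMem_iff] at hns
  set T := lam • (1 : H →L[ℂ] H) - S with hT
  have halg : algebraMap ℂ (H →L[ℂ] H) lam - S = T := by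
    rw [Algebra.algebraMap_eq_smul_one, hT]
  rw [halg] at hns
  obtain ⟨u, hu⟩ := hns
  have hz : T ((↑u⁻¹ : H →L[ℂ] H) y) = y := by
    rw [← hu, ← ContinuousLinearMap.mul_apply, u.mul_inv, ContinuousLinearMap.one_apply]
  have h0 : ⟪y, T ((↑u⁻¹ : H →L[ℂ] H) y)⟫ = 0 := by
    rw [← ContinuousLinearMap.adjoint_inner_left, hker, inner_zero_left]
  rw [hz] at h0
  exact hy0 (inner_self_eq_zero.mp h0)

end Shift

end WSAux

end

/-- The continuous spectrum of a hyponormal unilateral weighted shift with nonzero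
weights is exactly the circle of radius `M = lim ‖α n‖`. -/
theorem continuousSpectrum_of_hyponormal_unilateral_weighted_shift
    {H : Type*} [NormedAddCommGroup H] [InnerProductSpace ℂ H] [CompleteSpace H]
    (e : HilbertBasis ℕ ℂ H) (α : ℕ → ℂ) (S : H →L[ℂ] H)
    (hS : ∀ n : ℕ, S (e n) = α n • e (n + 1))
    (hmono : ∀ n : ℕ, ‖α n‖ ≤ ‖α (n + 1)‖)
    (hnz : ∀ n : ℕ, α n ≠ 0)
    (M : ℝ) (hM : Filter.Tendsto (fun n : ℕ => ‖α n‖) Filter.atTop (nhds M)) :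
    {lam : ℂ | lam ∈ spectrum ℂ S ∧
        Function.Injective ⇑(lam • (1 : H →L[ℂ] H) - S) ∧
        DenseRange ⇑(lam • (1 : H →L[ℂ] H) - S)}
      = {lam : ℂ | ‖lam‖ = M} := by
  classical
  haveI : Nontrivial H := by
    refine ⟨e 0, 0, fun h => ?_⟩
    have h1 := e.orthonormal.1 0
    rw [h] at h1
    simp at h1
  have hmon : Monotone fun n => ‖α n‖ := monotone_nat_of_le_succ hmono
  have hα : ∀ n, ‖α n‖ ≤ M := fun n => hmon.ge_of_tendsto hM n
  have hMpos : 0 < M := lt_of_lt_of_le (norm_pos_iff.mpr (hnz 0)) (hα 0)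
  have hSnorm : ‖S‖ ≤ M :=
    S.opNorm_le_bound hMpos.le (WSAux.norm_S_le e α S hS hα hMpos.le)
  ext lam
  simp only [Set.mem_setOf_eq]
  constructor
  · rintro ⟨hspec, -, hdense⟩
    have hle : ‖lam‖ ≤ M := le_trans (spectrum.norm_le_norm_of_mem hspec) hSnorm
    rcases lt_or_ge ‖lam‖ M with h | h
    · exfalso
      obtain ⟨y, hy0, hker⟩ := WSAux.exists_adjoint_ker e α S hS hnz hM h
      set T := lam • (1 : H →L[ℂ] H) - S with hT
      have hsub : Set.range ⇑T ⊆ {z : H | @inner ℂ _ _ z y = 0} := by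
        rintro _ ⟨x, rfl⟩
        show @inner ℂ _ _ (T x) y = 0
        rw [← inner_conj_symm (T x) y, ← ContinuousLinearMap.adjoint_inner_left,
          hker, inner_zero_left, map_zero]
      have hclosed : IsClosed {z : H | @inner ℂ _ _ z y = 0} :=
        isClosed_eq (Continuous.inner continuous_id continuous_const) continuous_const
      have hmem : y ∈ {z : H | @inner ℂ _ _ z y = 0} := by
        have h3 : closure (Set.range ⇑T) ⊆ {z : H | @inner ℂ _ _ z y = 0} :=
          closure_minimal hsub hclosed
        exact h3 (by rw [hdense.closure_eq]; trivial)
      exact hy0 (inner_self_eq_zero.mp hmem)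
    · exact le_antisymm hle h
  · intro hcirc
    have hspec : lam ∈ spectrum ℂ S := by
      have hseq : ∀ k : ℕ, ((k : ℂ) / (k + 1)) * lam ∈ spectrum ℂ S := by
        intro k
        refine WSAux.mem_spectrum_of_lt e α S hS hnz hM ?_
        have hq : ((k : ℂ) / (k + 1)) = (((k : ℝ) / (k + 1) : ℝ) : ℂ) := by
          push_cast; ring
        have hqn : ‖((k : ℂ) / (k + 1))‖ = (k : ℝ) / (k + 1) := by
          rw [hq, Complex.norm_real, Real.norm_eq_abs, abs_of_nonneg (by positivity)]
        rw [norm_mul, hqn, hcirc]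
        have h1 : (k : ℝ) / (k + 1) < 1 := by
          rw [div_lt_one (by positivity)]; linarith
        nlinarith
      have hlim : Filter.Tendsto (fun k : ℕ => ((k : ℂ) / (k + 1)) * lam)
          Filter.atTop (nhds lam) := by
        have hreal : Filter.Tendsto (fun k : ℕ => (k : ℝ) / (k + 1))
            Filter.atTop (nhds 1) := by
          have := tendsto_natCast_div_add_atTop (1 : ℝ)
          simpa using this
        have hcplx : Filter.Tendsto (fun k : ℕ => ((k : ℂ) / (k + 1)))
            Filter.atTop (nhds 1) := by
          have h4 := (Complex.continuous_ofReal.tendsto 1).comp hreal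
          simpa [Function.comp_def, Complex.ofReal_div] using h4
        simpa using hcplx.mul_const lam
      exact (spectrum.isClosed S).mem_of_tendsto hlim (Filter.Eventually.of_forall hseq)
    exact ⟨hspec, WSAux.inj e α S hS hnz lam,
      WSAux.dense_range_of_ge e α S hS hnz hα hcirc.ge⟩
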